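/- Every (Z_2^{2n+1})_ev-graded Lie superalgebra (the even part of a Z_2^{2n+1}-graded Lie superalgebra) is isomorphic, as a graded algebra, to a Z_2^{2n}-graded Lie algebra: regrading via the bijection f : Z_2^{2n} → (Z_2^{2n+1})_ev converts the sign (−1)^{f(α)·f(β)} into the sign (−1)^{Σ_i |α_i × β_i|} used in the definition of a Z_2^{2n}-graded Lie algebra. -/
import Mathlib


/-- `|v| = v₁ + v₂ mod 2` for a pair `v ∈ Z_2^2`. -/
def pabs (v : ZMod 2 × ZMod 2) : ZMod 2 := v.1 + v.2

/-- `|v × w|`: the mod-2 determinant of two 2-vectors. -/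
def pcross (v w : ZMod 2 × ZMod 2) : ZMod 2 := v.1 * w.2 + v.2 * w.1

/-- The mod-2 dot product on `Z_2^{2n}` written as `n` consecutive pairs. -/
def pdot {n : ℕ} (a b : Fin n → ZMod 2 × ZMod 2) : ZMod 2 :=
  ∑ i, ((a i).1 * (b i).1 + (a i).2 * (b i).2)

/-- The mod-2 dot product on `Z_2^{2n+1}`, modelled as `(Z_2^2)^n × Z_2`. -/
def fdot {n : ℕ} (a b : (Fin n → ZMod 2 × ZMod 2) × ZMod 2) : ZMod 2 :=
  pdot a.1 b.1 + a.2 * b.2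

/-- The map `f : Z_2^{2n} → Z_2^{2n+1}`,
`f(α) = (α₁, α₂ + |α₁|(1,1), …, αᵢ + Σ_{k<i}|α_k|(1,1), …, Σ_{k≤n}|α_k|)`. -/
def fmap {n : ℕ} (α : Fin n → ZMod 2 × ZMod 2) : (Fin n → ZMod 2 × ZMod 2) × ZMod 2 :=
  (fun i => α i + (∑ k ∈ Finset.Iio i, pabs (α k), ∑ k ∈ Finset.Iio i, pabs (α k)),
   ∑ k, pabs (α k))

lemma split_sum {n : ℕ} (F : Fin n → ZMod 2) (i : Fin n) : ∑ j, F j =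
      (∑ j ∈ Finset.Iio i, F j) + (∑ j ∈ Finset.Ioi i, F j) + F i := by
  have huniv : (Finset.univ : Finset (Fin n)) =
      ((Finset.Ioi i).disjUnion (Finset.Iio i) (Finset.disjoint_Ioi_Iio i)).cons i
        (by simp) := by
    ext j
    simp only [Finset.mem_univ, Finset.mem_cons, Finset.mem_disjUnion, Finset.mem_Ioi,
      Finset.mem_Iio, true_iff]
    rcases lt_trichotomy i j with h | h | h <;> tauto
  rw [huniv, Finset.sum_cons, Finset.sum_disjUnion]
  ring

lemma key {n : ℕ} (a b : Fin n → ZMod 2) :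
    (∑ i, a i) * (∑ i, b i) =
      ∑ i, ((∑ k ∈ Finset.Iio i, a k) * b i + (∑ k ∈ Finset.Iio i, b k) * a i + a i * b i) := by
  rw [Finset.sum_mul_sum]
  have swap : ∑ i, ∑ j ∈ Finset.Ioi i, a i * b j
      = ∑ j, ∑ i ∈ Finset.Iio j, a i * b j := by
    refine Finset.sum_comm' ?_
    intro i j; simp
  calc ∑ i, ∑ j, a i * b j
      = (∑ i, ∑ j ∈ Finset.Iio i, a i * b j) + (∑ i, ∑ j ∈ Finset.Ioi i, a i * b j)
        + ∑ i, a i * b i := by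
        rw [← Finset.sum_add_distrib, ← Finset.sum_add_distrib]
        exact Finset.sum_congr rfl fun i _ => split_sum _ i
    _ = _ := by
        rw [swap]
        have h1 : ∑ i, ∑ j ∈ Finset.Iio i, a i * b j = ∑ i, (∑ k ∈ Finset.Iio i, b k) * a i :=
          Finset.sum_congr rfl fun i _ => by
            rw [Finset.sum_mul]; exact Finset.sum_congr rfl fun k _ => mul_comm _ _
        have h2 : ∑ j, ∑ i ∈ Finset.Iio j, a i * b j = ∑ j, (∑ k ∈ Finset.Iio j, a k) * b j :=
          Finset.sum_congr rfl fun j _ => (Finset.sum_mul _ _ _).symm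
        rw [h1, h2, Finset.sum_add_distrib, Finset.sum_add_distrib]
        ring

lemma fdot_fmap {n : ℕ} (α β : Fin n → ZMod 2 × ZMod 2) :
    fdot (fmap α) (fmap β) = ∑ i, pcross (α i) (β i) := by
  have hterm : ∀ s t a1 a2 b1 b2 : ZMod 2,
      (a1 + s) * (b1 + t) + (a2 + s) * (b2 + t) +
        (s * (b1 + b2) + t * (a1 + a2) + (a1 + a2) * (b1 + b2)) = a1 * b2 + a2 * b1 := by
    decide
  unfold fdot pdot fmap pcross
  rw [key (fun k => pabs (α k)) (fun k => pabs (β k)), ← Finset.sum_add_distrib]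
  refine Finset.sum_congr rfl fun i _ => ?_
  simp only [Prod.fst_add, Prod.snd_add, pabs]
  exact hterm _ _ _ _ _ _

lemma fmap_add {n : ℕ} (α β : Fin n → ZMod 2 × ZMod 2) :
    fmap (α + β) = fmap α + fmap β := by
  have habs : ∀ v w, pabs (v + w) = pabs v + pabs w := by
    intro v w; simp only [pabs, Prod.fst_add, Prod.snd_add]; ring
  unfold fmap
  refine Prod.ext ?_ ?_
  · funext i
    simp only [Pi.add_apply, habs, Finset.sum_add_distrib, Prod.mk_add_mk]
    refine Prod.ext ?_ ?_ <;> simp only [Prod.fst_add, Prod.snd_add] <;> ring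
  · simp only [Pi.add_apply, habs, Finset.sum_add_distrib, Prod.snd_add]

/-- a `(Z_2^{2n+1})_ev`-graded Lie superalgebra (supported on even degrees,
with signs `(-1)^(a·b)`) becomes, after regrading along `f : Z_2^{2n} → (Z_2^{2n+1})_ev`,
a `Z_2^{2n}`-graded Lie algebra: closure in degree `α+β`, and antisymmetry and Jacobi hold
with the signs `(-1)^(Σᵢ |αᵢ × βᵢ|)`. -/
theorem stmt11 {n : ℕ} {V : Type*} [AddCommGroup V] [Module ℂ V]
    (g : ((Fin n → ZMod 2 × ZMod 2) × ZMod 2) → Submodule ℂ V)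
    (br : V →ₗ[ℂ] V →ₗ[ℂ] V)
    (hsupp : ∀ b, fdot b b ≠ 0 → g b = ⊥)
    (hgrade : ∀ a b, ∀ x ∈ g a, ∀ y ∈ g b, br x y ∈ g (a + b))
    (hanti : ∀ a b, ∀ x ∈ g a, ∀ y ∈ g b,
      br x y = (-((-1 : ℤ) ^ (fdot a b).val)) • br y x)
    (hjac : ∀ a b c, ∀ x ∈ g a, ∀ y ∈ g b, ∀ z ∈ g c,
      br x (br y z) = br (br x y) z + ((-1 : ℤ) ^ (fdot a b).val) • br y (br x z)) :
    (∀ α β : Fin n → ZMod 2 × ZMod 2,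
      ∀ x ∈ g (fmap α), ∀ y ∈ g (fmap β), br x y ∈ g (fmap (α + β))) ∧
    (∀ α β : Fin n → ZMod 2 × ZMod 2, ∀ x ∈ g (fmap α), ∀ y ∈ g (fmap β),
      br x y = (-((-1 : ℤ) ^ (∑ i, pcross (α i) (β i)).val)) • br y x) ∧
    (∀ α β γ : Fin n → ZMod 2 × ZMod 2,
      ∀ x ∈ g (fmap α), ∀ y ∈ g (fmap β), ∀ z ∈ g (fmap γ),
        br x (br y z) =
          br (br x y) z + ((-1 : ℤ) ^ (∑ i, pcross (α i) (β i)).val) • br y (br x z)) := by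
  refine ⟨fun α β x hx y hy => ?_, fun α β x hx y hy => ?_,
    fun α β γ x hx y hy z hz => ?_⟩
  · have h := hgrade _ _ x hx y hy
    rwa [← fmap_add] at h
  · rw [← fdot_fmap]
    exact hanti _ _ x hx y hy
  · rw [← fdot_fmap]
    exact hjac _ _ _ x hx y hy z hz
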